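/- Let C be a cycle of goods and N = {1,2,3} a regular set of three agents (each proportional with maximin share 1 and total utility 3). Let 0 < c ≤ 1. If for some agent i, two different bundles of an mms-split of C for agent i each have value at least c·mms(j) to some agent j ≠ i, then a c-sufficient allocation of the goods on C to the three agents exists. -/

import Mathlib

open scoped BigOperators

noncomputable section

/-- Total value of a bundle under an additive utility. -/
def bval {V : Type*} [DecidableEq V] (u : V → ℝ) (S : Finset V) : ℝ := ∑ v ∈ S, u v

/-- A `G`-bundle: a (possibly empty) set of vertices inducing a connected subgraph. -/
def IsBundle {V : Type*} (G : SimpleGraph V) (S : Finset V) : Prop :=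
  (S : Set V) = ∅ ∨ (G.induce (S : Set V)).Connected

/-- A split of the vertex set `A` into `n` pairwise disjoint `G`-bundles covering `A`. -/
def IsSplitOn {V : Type*} [DecidableEq V] (G : SimpleGraph V) (A : Finset V) (n : ℕ)
    (P : Fin n → Finset V) : Prop :=
  (∀ i, IsBundle G (P i)) ∧ (∀ i j, i ≠ j → Disjoint (P i) (P j)) ∧
  (∀ i, P i ⊆ A) ∧ (∀ v ∈ A, ∃ i, v ∈ P i)

/-- The maximin share over splits of `A` into `n` `G`-bundles. -/
def mmsOn {V : Type*} [DecidableEq V] (G : SimpleGraph V) (A : Finset V)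
    (n : ℕ) (u : V → ℝ) : ℝ :=
  sSup {q : ℝ | ∃ P : Fin n → Finset V, IsSplitOn G A n P ∧ ∀ i, q ≤ bval u (P i)}

/-- The maximin share `mms^(n)(G,u)`. -/
def mms {V : Type*} [DecidableEq V] [Fintype V] (G : SimpleGraph V)
    (n : ℕ) (u : V → ℝ) : ℝ := mmsOn G Finset.univ n u

/-- The cycle on `m` vertices, identified with `ZMod m`. -/
def cycleGraph (m : ℕ) : SimpleGraph (ZMod m) :=
  SimpleGraph.fromRel (fun v w => w = v + 1)

end

/-- Lemma on two good bundles in one mms-split: for a regular set of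
three agents, if two different bundles of agent `i`'s mms-split are each worth at
least `c·mms(j)` to another agent `j`, then a `c`-sufficient allocation exists. -/
theorem stmt11 (m : ℕ) [NeZero m] (hm : 3 ≤ m) (c : ℝ) (hc0 : 0 < c) (hc1 : c ≤ 1)
    (us : Fin 3 → ZMod m → ℝ) (hus : ∀ i v, 0 ≤ us i v)
    (hreg : ∀ i, mms (cycleGraph m) 3 (us i) = 1 ∧ bval (us i) Finset.univ = 3)
    (i j : Fin 3) (hij : j ≠ i)
    (P : Fin 3 → Finset (ZMod m))
    (hP : IsSplitOn (cycleGraph m) Finset.univ 3 P)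
    (hPmms : ∀ k, mms (cycleGraph m) 3 (us i) ≤ bval (us i) (P k))
    (k l : Fin 3) (hkl : k ≠ l)
    (hk : c * mms (cycleGraph m) 3 (us j) ≤ bval (us j) (P k))
    (hl : c * mms (cycleGraph m) 3 (us j) ≤ bval (us j) (P l)) :
    ∃ Q : Fin 3 → Finset (ZMod m), IsSplitOn (cycleGraph m) Finset.univ 3 Q ∧
      ∀ a, c * mms (cycleGraph m) 3 (us a) ≤ bval (us a) (Q a) := by
  have fin3_third : ∀ a b : Fin 3, a ≠ b →
      ∃ c, c ≠ a ∧ c ≠ b ∧ ∀ x : Fin 3, x = a ∨ x = b ∨ x = c := by decide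
  obtain ⟨hbun, hdisj, hsub, hcov⟩ := hP
  -- the third agent
  obtain ⟨t, htj, hti, hall⟩ := fin3_third j i hij
  -- sum of bundle values equals total value
  have hsum : ∀ a : Fin 3, (∑ s, bval (us a) (P s)) = 3 := by
    intro a
    have hbu : (Finset.univ : Finset (Fin 3)).biUnion P = (Finset.univ : Finset (ZMod m)) := by
      ext v
      simp only [Finset.mem_biUnion, Finset.mem_univ, true_and, iff_true]
      exact hcov v (Finset.mem_univ v)
    have := (hreg a).2
    rw [bval, ← hbu, Finset.sum_biUnion] at this
    · exact this
    · intro x _ y _ hxy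
      exact hdisj x y hxy
  -- a bundle good for agent t
  have hex : ∃ s, 1 ≤ bval (us t) (P s) := by
    by_contra h
    push_neg at h
    have : (∑ s, bval (us t) (P s)) < ∑ _s : Fin 3, (1 : ℝ) :=
      Finset.sum_lt_sum_of_nonempty Finset.univ_nonempty (fun s _ => h s)
    rw [hsum t] at this
    norm_num at this
  obtain ⟨s, hs⟩ := hex
  -- bundle for agent j, distinct from s
  set q : Fin 3 := if s = k then l else k with hqdef
  have hqs : q ≠ s := by
    rw [hqdef]
    split_ifs with h
    · rw [h]; exact fun hh => hkl hh.symm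
    · exact fun hh => h hh.symm
  have hq : c * mms (cycleGraph m) 3 (us j) ≤ bval (us j) (P q) := by
    by_cases h : s = k <;> simp [hqdef, h, hk, hl]
  -- remaining bundle for agent i
  obtain ⟨r, hrq, hrs, hallb⟩ := fin3_third q s hqs
  -- the assignment
  set σ : Fin 3 → Fin 3 := fun a => if a = i then r else if a = j then q else s with hσ
  have hσi : σ i = r := by simp [hσ]
  have hσj : σ j = q := by simp [hσ, hij]
  have hσt : σ t = s := by simp [hσ, hti, htj]
  have hinj : Function.Injective σ := by
    intro a b hab
    by_contra hne
    rcases hall a with ha | ha | ha <;> rcases hall b with hb | hb | hb <;>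
      subst ha <;> subst hb <;> clear hσ hqdef <;>
      simp_all [hσi, hσj, hσt] <;>
      first
      | exact hrq hab.symm | exact hrq hab | exact hrs hab.symm | exact hrs hab
      | exact hqs hab | exact hqs hab.symm
  refine ⟨fun a => P (σ a), ⟨fun a => hbun (σ a), fun a b hab => hdisj _ _ (fun h => hab (hinj h)),
    fun a => hsub (σ a), fun v hv => ?_⟩, ?_⟩
  · obtain ⟨idx, hidx⟩ := hcov v hv
    obtain ⟨a, ha⟩ := (Finite.injective_iff_surjective.mp hinj) idx
    exact ⟨a, show v ∈ P (σ a) from ha ▸ hidx⟩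
  · intro a
    show c * mms (cycleGraph m) 3 (us a) ≤ bval (us a) (P (σ a))
    rcases hall a with ha | ha | ha
    · rw [ha, hσj]; exact hq
    · rw [ha, hσi, (hreg i).1, mul_one]
      calc c ≤ 1 := hc1
        _ ≤ bval (us i) (P r) := by have := hPmms r; rwa [(hreg i).1] at this
    · rw [ha, hσt, (hreg t).1, mul_one]
      linarith
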